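/- Let F be a field, let k ≥ 2 and α ≥ 1 be integers, and let x_1, ..., x_k be nonzero elements of F whose α-th powers are pairwise distinct (hence the x_i themselves are pairwise distinct). For 1 ≤ i ≤ k let ω_i = (1, x_i, ..., x_i^{k-2}) ∈ F^{k-1}. If T_1 and T_2 are symmetric (k-1)×(k-1) matrices over F satisfying ω_i T_1 + x_i^α ω_i T_2 = 0 for every i = 1, ..., k, then T_1 = 0 and T_2 = 0. -/

import Mathlib

open Matrix

private lemma vand_cancel_vec {F : Type*} [Field F] {m : ℕ} {y : Fin m → F}
    (hy : Function.Injective y) {v : Fin m → F}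
    (h : ∀ i : Fin m, (fun j : Fin m => y i ^ (j : ℕ)) ⬝ᵥ v = 0) : v = 0 := by
  apply Matrix.eq_zero_of_forall_index_sum_pow_mul_eq_zero hy
  intro j
  simpa [dotProduct] using h j

private lemma vand_cancel_mat {F : Type*} [Field F] {m : ℕ} {y : Fin m → F}
    (hy : Function.Injective y) {T : Matrix (Fin m) (Fin m) F}
    (h : ∀ i : Fin m, (fun j : Fin m => y i ^ (j : ℕ)) ᵥ* T = 0) : T = 0 := by
  ext r c
  have : (fun r => T r c) = 0 := by
    apply vand_cancel_vec hy
    intro i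
    have := congrFun (h i) c
    simpa [Matrix.vecMul, dotProduct] using this
  exact congrFun this r

/-- Let `F` be a field, `k ≥ 2` and `α ≥ 1` integers, and
`x 0, …, x (k-1)` nonzero elements of `F` whose `α`-th powers are pairwise
distinct.  For each `i` let `ω i = (1, x i, …, (x i)^(k-2)) ∈ F^(k-1)`.
If `T₁` and `T₂` are symmetric `(k-1) × (k-1)` matrices over `F` with
`ω i * T₁ + (x i)^α • (ω i * T₂) = 0` for every `i`, then `T₁ = 0` and `T₂ = 0`. -/
theorem symm_pair_vanish_of_vandermonde_relations {F : Type*} [Field F]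
    (k α : ℕ) (hk : 2 ≤ k) (hα : 1 ≤ α)
    (x : Fin k → F) (hx0 : ∀ i, x i ≠ 0)
    (hx : ∀ i j : Fin k, i ≠ j → x i ^ α ≠ x j ^ α)
    (T1 T2 : Matrix (Fin (k - 1)) (Fin (k - 1)) F)
    (hT1 : T1.IsSymm) (hT2 : T2.IsSymm)
    (hrel : ∀ i : Fin k,
      (fun j : Fin (k - 1) => x i ^ (j : ℕ)) ᵥ* T1 +
        x i ^ α • ((fun j : Fin (k - 1) => x i ^ (j : ℕ)) ᵥ* T2) = 0) :
    T1 = 0 ∧ T2 = 0 := by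
  obtain ⟨m, rfl⟩ : ∃ m, k = m + 1 := ⟨k - 1, by omega⟩
  set ω : Fin (m + 1) → Fin (m + 1 - 1) → F := fun i j => x i ^ (j : ℕ) with hωdef
  -- injectivity of x
  have hxinj : Function.Injective x := by
    intro i j hij
    by_contra hne
    exact hx i j hne (by rw [hij])
  -- symmetry of the bilinear forms
  have hsymm : ∀ (T : Matrix (Fin (m + 1 - 1)) (Fin (m + 1 - 1)) F), T.IsSymm →
      ∀ i j, (ω i ᵥ* T) ⬝ᵥ ω j = (ω j ᵥ* T) ⬝ᵥ ω i := by
    intro T hT i j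
    calc (ω i ᵥ* T) ⬝ᵥ ω j = ω i ⬝ᵥ (T *ᵥ ω j) := (Matrix.dotProduct_mulVec _ _ _).symm
      _ = ω i ⬝ᵥ (Tᵀ *ᵥ ω j) := by rw [hT.eq]
      _ = ω i ⬝ᵥ (ω j ᵥ* T) := by rw [Matrix.mulVec_transpose]
      _ = (ω j ᵥ* T) ⬝ᵥ ω i := dotProduct_comm _ _
  -- the relation as an equality
  have h1 : ∀ i, ω i ᵥ* T1 = -(x i ^ α • (ω i ᵥ* T2)) := by
    intro i
    exact eq_neg_of_add_eq_zero_left (hrel i)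
  -- off-diagonal entries of Q vanish
  have hQ0 : ∀ i j, i ≠ j → (ω i ᵥ* T2) ⬝ᵥ ω j = 0 := by
    intro i j hij
    have e1 : (ω i ᵥ* T1) ⬝ᵥ ω j = -(x i ^ α * ((ω i ᵥ* T2) ⬝ᵥ ω j)) := by
      rw [h1 i]; simp [neg_dotProduct, smul_dotProduct, smul_eq_mul]
    have e2 : (ω j ᵥ* T1) ⬝ᵥ ω i = -(x j ^ α * ((ω j ᵥ* T2) ⬝ᵥ ω i)) := by
      rw [h1 j]; simp [neg_dotProduct, smul_dotProduct, smul_eq_mul]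
    have s1 := hsymm T1 hT1 i j
    have s2 := hsymm T2 hT2 i j
    have key : (x i ^ α - x j ^ α) * ((ω i ᵥ* T2) ⬝ᵥ ω j) = 0 := by
      linear_combination e1 - e2 - s1 - x j ^ α * s2
    rcases mul_eq_zero.mp key with h | h
    · exact absurd (sub_eq_zero.mp h) (hx i j hij)
    · exact h
  -- each row ω i ᵥ* T2 vanishes
  have hvT2 : ∀ i, ω i ᵥ* T2 = 0 := by
    intro i
    apply vand_cancel_vec (m := m) (y := fun l : Fin m => x (i.succAbove l))
      (hxinj.comp (Fin.succAbove_right_injective))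
    intro l
    have : (fun j : Fin m => x (i.succAbove l) ^ (j : ℕ)) = ω (i.succAbove l) := rfl
    rw [this, dotProduct_comm]
    exact hQ0 i (i.succAbove l) (Fin.succAbove_ne i l).symm
  have hT2z : T2 = 0 := by
    apply vand_cancel_mat (y := fun l : Fin m => x ((0 : Fin (m+1)).succAbove l))
      (hxinj.comp (Fin.succAbove_right_injective))
    intro l
    exact hvT2 _
  have hT1z : T1 = 0 := by
    apply vand_cancel_mat (y := fun l : Fin m => x ((0 : Fin (m+1)).succAbove l))
      (hxinj.comp (Fin.succAbove_right_injective))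
    intro l
    have := h1 ((0 : Fin (m+1)).succAbove l)
    rw [hT2z] at this
    simp at this
    exact this
  exact ⟨hT1z, hT2z⟩
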